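/- Let n ≥ 4 and τ ≥ 1 be natural numbers, fix an ordered pair (a₀, b₀) with a₀ < b₀ in Fin n, and let E be the set of all pairs (a,b) with a < b in Fin n except (a₀,b₀), so that |E| = n(n−1)/2 − 1. Let V : Fin τ → Fin n → ℂ be voltage measurements whose nτ coordinates {V_k(i) : k ∈ Fin τ, i ∈ Fin n} form an algebraically independent family over ℚ. Define the voltage coefficient matrix A ∈ ℂ^{(nτ)×|E|} whose rows are indexed by pairs (k,i) ∈ Fin τ × Fin n and columns by edges (a,b) ∈ E, with entry equal to V_k(a) − V_k(b) if i = a, equal to V_k(b) − V_k(a) if i = b, and 0 otherwise. Then the map y ↦ A y from ℂ^{|E|} to ℂ^{nτ} is injective (i.e., A has full column rank n(n−1)/2 − 1) if and only if τ ≥ n−2. -/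

import Mathlib

open Finset MvPolynomial

namespace Stmt5Aux

abbrev S (n : ℕ) (a₀ b₀ : Fin n) := {p : Fin n × Fin n // p.1 < p.2 ∧ p ≠ (a₀, b₀)}

def d {n : ℕ} (p : Fin n × Fin n) (i : Fin n) : ℂ :=
  (if i = p.1 then 1 else 0) - (if i = p.2 then 1 else 0)

lemma sum_d {n : ℕ} (p : Fin n × Fin n) (_hp : p.1 ≠ p.2) : ∑ j, d p j = 0 := by
  simp [d, Finset.sum_sub_distrib]

lemma sum_d_mul {n : ℕ} (p : Fin n × Fin n) (v : Fin n → ℂ) :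
    ∑ j, d p j * v j = v p.1 - v p.2 := by
  simp [d, sub_mul, Finset.sum_sub_distrib, ite_mul]

lemma d_mul_d {n : ℕ} (a b : Fin n) (hab : a < b) (q : Fin n × Fin n) (hq : q.1 < q.2) :
    d q a * d q b = if q = (a, b) then -1 else 0 := by
  have hab' : a ≠ b := Fin.ne_of_lt hab
  have hq' : q.1 ≠ q.2 := Fin.ne_of_lt hq
  by_cases h1 : a = q.1 <;> by_cases h2 : a = q.2 <;>
    by_cases h3 : b = q.1 <;> by_cases h4 : b = q.2 <;>
    simp_all [d, Prod.ext_iff, eq_comm] <;>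
  first
  | rfl
  | (exfalso; omega)

noncomputable def g {n : ℕ} (a₀ b₀ : Fin n) (y : S n a₀ b₀ → ℂ) (i j : Fin n) : ℂ :=
  ∑ p : S n a₀ b₀, y p * d p.val i * d p.val j

lemma g_symm {n : ℕ} {a₀ b₀ : Fin n} (y : S n a₀ b₀ → ℂ) (i j : Fin n) :
    g a₀ b₀ y i j = g a₀ b₀ y j i := by
  unfold g; exact Finset.sum_congr rfl fun p _ => by ring

lemma g_sum_row {n : ℕ} {a₀ b₀ : Fin n} (y : S n a₀ b₀ → ℂ) (i : Fin n) :
    ∑ j, g a₀ b₀ y i j = 0 := by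
  unfold g
  rw [Finset.sum_comm]
  refine Finset.sum_eq_zero fun p _ => ?_
  calc ∑ j, y p * d p.val i * d p.val j = y p * d p.val i * ∑ j, d p.val j := by
        rw [Finset.mul_sum]
    _ = 0 := by rw [sum_d _ (Fin.ne_of_lt p.2.1), mul_zero]

lemma g_offdiag {n : ℕ} {a₀ b₀ : Fin n} (y : S n a₀ b₀ → ℂ) (a b : Fin n) (hab : a < b) :
    g a₀ b₀ y a b = if h : (a, b) ≠ (a₀, b₀) then -y ⟨(a,b), hab, h⟩ else 0 := by
  unfold g
  have key : ∀ p : S n a₀ b₀, y p * d p.val a * d p.val b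
      = if p.val = (a, b) then -y p else 0 := fun p => by
    rw [mul_assoc, d_mul_d a b hab p.val p.2.1]
    split <;> simp
  rw [Finset.sum_congr rfl fun p _ => key p]
  by_cases h : (a, b) ≠ (a₀, b₀)
  · rw [dif_pos h, Finset.sum_eq_single (⟨(a,b), hab, h⟩ : S n a₀ b₀)]
    · simp
    · intro q _ hq
      rw [if_neg (fun hc => hq (Subtype.ext hc))]
    · simp
  · rw [dif_neg h]
    refine Finset.sum_eq_zero fun q _ => ?_
    rw [if_neg ?_]
    intro hc
    exact q.2.2 (hc.trans (not_not.mp h))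

lemma A_entry_eq {n τ : ℕ} {a₀ b₀ : Fin n} (V : Fin τ → Fin n → ℂ)
    (A : Matrix (Fin τ × Fin n) (S n a₀ b₀) ℂ)
    (hA : ∀ (k : Fin τ) (i : Fin n) (p : S n a₀ b₀),
      A (k, i) p =
        if i = p.1.1 then V k p.1.1 - V k p.1.2
        else if i = p.1.2 then V k p.1.2 - V k p.1.1 else 0)
    (k : Fin τ) (i : Fin n) (p : S n a₀ b₀) :
    A (k, i) p = d p.val i * (V k p.1.1 - V k p.1.2) := by
  rw [hA]
  have hne : p.1.1 ≠ p.1.2 := Fin.ne_of_lt p.2.1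
  by_cases h1 : i = p.1.1
  · rw [if_pos h1]
    simp [d, h1, hne]
  · rw [if_neg h1]
    by_cases h2 : i = p.1.2
    · rw [if_pos h2]; simp [d, h1, h2, Ne.symm hne]
    · rw [if_neg h2]; simp [d, h1, h2]

lemma bridge {n τ : ℕ} {a₀ b₀ : Fin n} (V : Fin τ → Fin n → ℂ)
    (A : Matrix (Fin τ × Fin n) (S n a₀ b₀) ℂ)
    (hA : ∀ (k : Fin τ) (i : Fin n) (p : S n a₀ b₀),
      A (k, i) p =
        if i = p.1.1 then V k p.1.1 - V k p.1.2
        else if i = p.1.2 then V k p.1.2 - V k p.1.1 else 0)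
    (y : S n a₀ b₀ → ℂ) (k : Fin τ) (i : Fin n) :
    A.mulVec y (k, i) = ∑ j, g a₀ b₀ y i j * V k j := by
  unfold g
  calc A.mulVec y (k, i) = ∑ p : S n a₀ b₀, A (k,i) p * y p := rfl
    _ = ∑ p : S n a₀ b₀, y p * d p.val i * (∑ j, d p.val j * V k j) := by
        refine Finset.sum_congr rfl fun p _ => ?_
        rw [A_entry_eq V A hA, sum_d_mul]; ring
    _ = ∑ p : S n a₀ b₀, ∑ j, (y p * d p.val i * d p.val j) * V k j := by
        refine Finset.sum_congr rfl fun p _ => ?_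
        rw [Finset.mul_sum]
        exact Finset.sum_congr rfl fun j _ => by ring
    _ = ∑ j, (∑ p : S n a₀ b₀, y p * d p.val i * d p.val j) * V k j := by
        rw [Finset.sum_comm]
        exact Finset.sum_congr rfl fun j _ => by rw [Finset.sum_mul]

noncomputable def rho (m : ℕ) : (Fin (m+2) ⊕ Unit) ≃ Fin (m+3) where
  toFun := Sum.elim (fun k => k.succ) (fun _ => 0)
  invFun := Fin.cases (Sum.inr ()) (fun k => Sum.inl k)
  left_inv := by rintro (k|u) <;> simp
  right_inv := by
    intro j
    induction j using Fin.cases <;> simp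

@[simp] lemma rho_inl (m : ℕ) (k : Fin (m+2)) : rho m (Sum.inl k) = k.succ := rfl
@[simp] lemma rho_inr (m : ℕ) (u : Unit) : rho m (Sum.inr u) = 0 := rfl

lemma ker_aux (m τ : ℕ) (hτ2 : m + 2 ≤ τ) (V : Fin τ → Fin (m+4) → ℂ)
    (hgen : AlgebraicIndependent ℚ fun p : Fin τ × Fin (m+4) => V p.1 p.2)
    (c : Fin (m+4)) (z : Fin (m+4) → ℂ) (hzc : z c = 0)
    (hz1 : ∑ j, z j = 0)
    (hzV : ∀ k : Fin τ, ∑ j, V k j * z j = 0) :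
    z = 0 := by
  classical
  have hcard : Fintype.card {j : Fin (m+4) // j ≠ c} = Fintype.card (Fin (m+2) ⊕ Unit) := by
    simp [Fintype.card_subtype_compl]
  let e : (Fin (m+2) ⊕ Unit) ≃ {j : Fin (m+4) // j ≠ c} :=
    (Fintype.equivOfCardEq hcard.symm)
  let B : (Fin (m+2) ⊕ Unit) → Fin (m+4) → ℂ :=
    Sum.elim (fun k => V (Fin.castLE (le_trans (by omega) hτ2) k)) (fun _ _ => 1)
  let M : Matrix (Fin (m+2) ⊕ Unit) (Fin (m+2) ⊕ Unit) ℂ :=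
    Matrix.of fun r s => B r (e s).val
  let Mp : Matrix (Fin (m+2) ⊕ Unit) (Fin (m+2) ⊕ Unit) (MvPolynomial (Fin τ × Fin (m+4)) ℚ) :=
    Matrix.of fun r s =>
      Sum.elim (fun k : Fin (m+2) => X (Fin.castLE (le_trans (by omega) hτ2) k, (e s).val))
        (fun _ => 1) r
  have hmap : M = Mp.map (aeval fun p : Fin τ × Fin (m+4) => V p.1 p.2) := by
    ext r s
    rcases r with k | u <;> simp [M, Mp, B, Matrix.map]
  have hdetp : Mp.det ≠ 0 := by
    intro h0
    have := congrArg (MvPolynomial.eval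
      (fun q : Fin τ × Fin (m+4) => ((q.2 : ℕ) : ℚ) ^ ((q.1 : ℕ) + 1))) h0
    rw [RingHom.map_det] at this
    simp only [map_zero] at this
    set w : (Fin (m+2) ⊕ Unit) → ℚ := fun s => (((e s).val : ℕ) : ℚ) with hw
    have hmat : Mp.map (MvPolynomial.eval
        (fun q : Fin τ × Fin (m+4) => ((q.2 : ℕ) : ℚ) ^ ((q.1 : ℕ) + 1)))
        = ((Matrix.vandermonde (w ∘ (rho m).symm)).transpose).submatrix (rho m) (rho m) := by
      ext r s
      rcases r with k | u <;>
        simp [Mp, Matrix.vandermonde, Matrix.submatrix, Matrix.map, Matrix.transpose,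
          Equiv.symm_apply_apply, Fin.val_succ, hw]
    rw [RingHom.mapMatrix_apply, hmat, Matrix.det_submatrix_equiv_self,
      Matrix.det_transpose] at this
    have hwinj : Function.Injective (w ∘ (rho m).symm) := by
      intro s t hst
      simp only [Function.comp, w] at hst
      have h1 : ((e ((rho m).symm s)).val : ℕ) = ((e ((rho m).symm t)).val : ℕ) := by
        exact_mod_cast hst
      exact (rho m).symm.injective (e.injective (Subtype.ext (Fin.ext h1)))
    exact (Matrix.det_vandermonde_ne_zero_iff.mpr hwinj) this
  have hdet : M.det ≠ 0 := by
    rw [hmap]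
    intro h
    have h' : (aeval fun p : Fin τ × Fin (m+4) => V p.1 p.2) Mp.det = 0 := by
      rw [AlgHom.map_det, AlgHom.mapMatrix_apply, h]
    have h0 : (Matrix.det Mp : MvPolynomial (Fin τ × Fin (m+4)) ℚ) = 0 :=
      algebraicIndependent_iff_injective_aeval.mp hgen (by simpa using h')
    exact hdetp h0
  let z' : (Fin (m+2) ⊕ Unit) → ℂ := fun s => z (e s).val
  have hMz : M.mulVec z' = 0 := by
    funext r
    have key : ∑ s, B r (e s).val * z (e s).val = ∑ j, B r j * z j := by
      have k1 : ∑ s, B r (e s).val * z (e s).val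
          = ∑ t : {j : Fin (m+4) // j ≠ c}, B r t.val * z t.val :=
        Fintype.sum_equiv e _ _ (fun s => rfl)
      have k2 : ∑ j ∈ Finset.univ.filter (fun j : Fin (m+4) => j ≠ c), B r j * z j
          = ∑ t : {j : Fin (m+4) // j ≠ c}, B r t.val * z t.val :=
        Finset.sum_subtype _ (by simp) _
      rw [k1, ← k2, Finset.sum_filter]
      refine Finset.sum_congr rfl fun j _ => ?_
      by_cases hj : j = c
      · subst hj; simp [hzc]
      · simp [hj]
    have hMzr : M.mulVec z' r = ∑ j, B r j * z j := key
    rw [hMzr]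
    rcases r with k | u
    · simpa [B] using hzV _
    · simpa [B] using hz1
  have hz' : z' = 0 := by
    have hinj : Function.Injective M.mulVec :=
      Matrix.mulVec_injective_iff_isUnit.mpr
        (Matrix.isUnit_iff_isUnit_det M |>.mpr (isUnit_iff_ne_zero.mpr hdet))
    apply hinj
    rw [hMz, Matrix.mulVec_zero]
  funext j
  by_cases hj : j = c
  · subst hj; exact hzc
  · have := congrFun hz' (e.symm ⟨j, hj⟩)
    simpa [z'] using this

lemma exists_L {N : ℕ} (u u' : Fin N → ℂ) (hu : u ≠ 0) (hu' : u' ≠ 0)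
    (hpar : ∀ c : ℂ, u ≠ c • u') (a₀ b₀ : Fin N) :
    ∃ α γ : ℂ, α * (u a₀ * u b₀) + γ * (u' a₀ * u' b₀) = 0 ∧
      ∃ i j : Fin N, α * (u i * u j) + γ * (u' i * u' j) ≠ 0 := by
  by_cases hc1 : u a₀ * u b₀ = 0
  · refine ⟨1, 0, by rw [hc1]; ring, ?_⟩
    obtain ⟨i, hi⟩ := Function.ne_iff.mp hu
    exact ⟨i, i, by simpa using mul_ne_zero hi hi⟩
  · refine ⟨u' a₀ * u' b₀, -(u a₀ * u b₀), by ring, ?_⟩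
    by_contra hall
    push_neg at hall
    set c₁ := u a₀ * u b₀ with hc₁
    set c₃ := u' a₀ * u' b₀ with hc₃
    have hall' : ∀ i j, c₃ * (u i * u j) = c₁ * (u' i * u' j) := by
      intro i j
      have h2 : c₃ * (u i * u j) + -(c₁) * (u' i * u' j) = 0 := hall i j
      linear_combination h2
    obtain ⟨i₀, hi₀0⟩ := Function.ne_iff.mp hu'
    have hi₀ : u' i₀ ≠ 0 := by simpa using hi₀0
    have hc3 : c₃ ≠ 0 := by
      intro h
      have h5 := hall' i₀ i₀
      rw [h, zero_mul] at h5
      exact hc1 (by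
        rcases mul_eq_zero.mp h5.symm with h' | h'
        · exact absurd h' hc1
        · exact absurd (mul_self_eq_zero.mp h') hi₀)
    have hui₀ : u i₀ ≠ 0 := by
      intro h
      have h5 := hall' i₀ i₀
      rw [h] at h5
      simp at h5
      rcases h5 with h' | h'
      · exact hc1 h'
      · exact hi₀ h'
    apply hpar (c₁ * u' i₀ / (c₃ * u i₀))
    funext i
    have h5 := hall' i i₀
    have h3 : c₃ * u i₀ ≠ 0 := mul_ne_zero hc3 hui₀
    rw [Pi.smul_apply, smul_eq_mul, div_mul_eq_mul_div, eq_div_iff h3]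
    simp only [hc₁, hc₃] at h5 ⊢
    linear_combination h5

lemma exists_uu' (m τ : ℕ) (hτ3 : τ ≤ m + 1) (V : Fin τ → Fin (m+4) → ℂ) :
    ∃ u u' : Fin (m+4) → ℂ, u ≠ 0 ∧ u' ≠ 0 ∧ (∀ c : ℂ, u ≠ c • u') ∧
      (∑ j, u j = 0) ∧ (∑ j, u' j = 0) ∧
      (∀ k, ∑ j, V k j * u j = 0) ∧ (∀ k, ∑ j, V k j * u' j = 0) := by
  classical
  set B' : Matrix (Fin τ ⊕ Unit) (Fin (m+4)) ℂ :=
    Matrix.of (Sum.elim V fun _ _ => 1) with hB'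
  set K := LinearMap.ker B'.mulVecLin with hK
  have h1 := LinearMap.finrank_range_add_finrank_ker B'.mulVecLin
  rw [Module.finrank_fintype_fun_eq_card, Fintype.card_fin] at h1
  have h2 : Module.finrank ℂ (LinearMap.range B'.mulVecLin) ≤ τ + 1 := by
    have := B'.rank_le_card_height
    simpa [Matrix.rank] using this
  have hrk : 2 ≤ Module.finrank ℂ K := by rw [hK]; omega
  let b := Module.finBasis ℂ K
  let i0 : Fin (Module.finrank ℂ K) := ⟨0, by omega⟩
  let i1 : Fin (Module.finrank ℂ K) := ⟨1, by omega⟩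
  have hi01 : i0 ≠ i1 := by
    intro h
    have := congrArg Fin.val h
    simp [i0, i1] at this
  have hmem : ∀ i : Fin (Module.finrank ℂ K), B'.mulVec ((b i : Fin (m+4) → ℂ)) = 0 := by
    intro i
    have hm : (b i : Fin (m+4) → ℂ) ∈ LinearMap.ker B'.mulVecLin := (b i).2
    rw [LinearMap.mem_ker] at hm
    rw [← Matrix.mulVecLin_apply]
    exact hm
  refine ⟨(b i0 : Fin (m+4) → ℂ), (b i1 : Fin (m+4) → ℂ), ?_, ?_, ?_, ?_, ?_, ?_, ?_⟩
  · exact fun h => b.ne_zero i0 (Subtype.ext h)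
  · exact fun h => b.ne_zero i1 (Subtype.ext h)
  · intro c hc
    have hKeq : b i0 = c • b i1 := Subtype.ext (by simpa using hc)
    have h := congrArg (fun x => b.repr x i0) hKeq
    simp only [Module.Basis.repr_self, map_smul, Finsupp.smul_apply, Finsupp.single_apply,
      smul_eq_mul] at h
    rw [if_pos trivial, if_neg (fun hh : i1 = i0 => hi01 hh.symm)] at h
    simpa using h
  · have h2 := congrFun (hmem i0) (Sum.inr ())
    simpa [B', Matrix.mulVec, dotProduct] using h2
  · have h2 := congrFun (hmem i1) (Sum.inr ())
    simpa [B', Matrix.mulVec, dotProduct] using h2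
  · intro k
    have h2 := congrFun (hmem i0) (Sum.inl k)
    simpa [B', Matrix.mulVec, dotProduct] using h2
  · intro k
    have h2 := congrFun (hmem i1) (Sum.inl k)
    simpa [B', Matrix.mulVec, dotProduct] using h2

end Stmt5Aux

/-- For the complete graph on `n ≥ 4` nodes minus the single edge
`(a₀, b₀)`, with generic (algebraically independent over `ℚ`) voltage measurements
`V : Fin τ → Fin n → ℂ`, the voltage coefficient matrix `A` has full column rank
(equivalently `y ↦ A y` is injective) if and only if `τ ≥ n - 2`. -/
theorem stmt5 (n τ : ℕ) (hn : 4 ≤ n) (hτ : 1 ≤ τ)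
    (a₀ b₀ : Fin n) (hab : a₀ < b₀)
    (V : Fin τ → Fin n → ℂ)
    (hgen : AlgebraicIndependent ℚ fun p : Fin τ × Fin n => V p.1 p.2)
    (A : Matrix (Fin τ × Fin n) {p : Fin n × Fin n // p.1 < p.2 ∧ p ≠ (a₀, b₀)} ℂ)
    (hA : ∀ (k : Fin τ) (i : Fin n)
        (p : {p : Fin n × Fin n // p.1 < p.2 ∧ p ≠ (a₀, b₀)}),
      A (k, i) p =
        if i = p.1.1 then V k p.1.1 - V k p.1.2
        else if i = p.1.2 then V k p.1.2 - V k p.1.1 else 0) :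
    Function.Injective A.mulVec ↔ n - 2 ≤ τ := by
  classical
  obtain ⟨m, rfl⟩ : ∃ m, n = m + 4 := ⟨n - 4, by omega⟩
  have harith : (m + 4) - 2 = m + 2 := by omega
  rw [harith]
  constructor
  · -- injective → m + 2 ≤ τ
    intro hinj
    by_contra hτ3
    push_neg at hτ3
    obtain ⟨u, u', hu, hu', hpar, hsu, hsu', hVu, hVu'⟩ :=
      Stmt5Aux.exists_uu' m τ (by omega) V
    obtain ⟨α, γ, hzero, i₀, j₀, hne0⟩ := Stmt5Aux.exists_L u u' hu hu' hpar a₀ b₀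
    set L : Fin (m+4) → Fin (m+4) → ℂ :=
      fun i j => α * (u i * u j) + γ * (u' i * u' j) with hL
    have hLsymm : ∀ i j, L i j = L j i := fun i j => by simp only [hL]; ring
    have hLrow : ∀ i, ∑ j, L i j = 0 := by
      intro i
      calc ∑ j, (α * (u i * u j) + γ * (u' i * u' j))
          = ∑ j, (α * u i * u j + γ * u' i * u' j) :=
            Finset.sum_congr rfl fun j _ => by ring
        _ = α * u i * (∑ j, u j) + γ * u' i * (∑ j, u' j) := by
            rw [Finset.sum_add_distrib, ← Finset.mul_sum, ← Finset.mul_sum]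
        _ = 0 := by rw [hsu, hsu']; ring
    have hLV : ∀ (k : Fin τ) i, ∑ j, L i j * V k j = 0 := by
      intro k i
      calc ∑ j, (α * (u i * u j) + γ * (u' i * u' j)) * V k j
          = ∑ j, (α * u i * (V k j * u j) + γ * u' i * (V k j * u' j)) :=
            Finset.sum_congr rfl fun j _ => by ring
        _ = α * u i * (∑ j, V k j * u j) + γ * u' i * (∑ j, V k j * u' j) := by
            rw [Finset.sum_add_distrib, ← Finset.mul_sum, ← Finset.mul_sum]
        _ = 0 := by rw [hVu k, hVu' k]; ring
    have hLab : L a₀ b₀ = 0 := hzero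
    set w : Stmt5Aux.S (m+4) a₀ b₀ → ℂ := fun p => -(L p.1.1 p.1.2) with hw
    have hoff_of : ∀ (h0 : w = 0) i j, i < j → L i j = 0 := by
      intro h0 i j hlt
      by_cases hp : (i, j) = (a₀, b₀)
      · have h1 : i = a₀ := congrArg Prod.fst hp
        have h2 : j = b₀ := congrArg Prod.snd hp
        rw [h1, h2]; exact hLab
      · have := congrFun h0 ⟨(i,j), hlt, hp⟩
        simpa [hw] using this
    have hwne : w ≠ 0 := by
      intro h0
      have hoff : ∀ i j, i ≠ j → L i j = 0 := by
        intro i j hij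
        rcases lt_or_gt_of_ne hij with hlt | hgt
        · exact hoff_of h0 i j hlt
        · rw [hLsymm]; exact hoff_of h0 j i hgt
      have hdiag : ∀ i, L i i = 0 := by
        intro i
        have h1 := hLrow i
        rw [← Finset.add_sum_erase Finset.univ _ (Finset.mem_univ i)] at h1
        have h2 : ∑ j ∈ Finset.univ.erase i, L i j = 0 :=
          Finset.sum_eq_zero fun j hj => hoff i j (Ne.symm (Finset.ne_of_mem_erase hj))
        rw [h2, add_zero] at h1
        exact h1
      apply hne0
      show L i₀ j₀ = 0
      by_cases hij : i₀ = j₀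
      · subst hij; exact hdiag i₀
      · exact hoff i₀ j₀ hij
    have hoffg : ∀ i j, i < j → Stmt5Aux.g a₀ b₀ w i j = L i j := by
      intro i j hlt
      rw [Stmt5Aux.g_offdiag w i j hlt]
      by_cases hp : (i, j) ≠ (a₀, b₀)
      · rw [dif_pos hp]; simp [hw]
      · rw [dif_neg hp]
        push_neg at hp
        have h1 : i = a₀ := congrArg Prod.fst hp
        have h2 : j = b₀ := congrArg Prod.snd hp
        rw [h1, h2]; exact hLab.symm
    have hoffg' : ∀ i j, i ≠ j → Stmt5Aux.g a₀ b₀ w i j = L i j := by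
      intro i j hij
      rcases lt_or_gt_of_ne hij with hlt | hgt
      · exact hoffg i j hlt
      · rw [Stmt5Aux.g_symm, hLsymm]; exact hoffg j i hgt
    have hgL : ∀ i j, Stmt5Aux.g a₀ b₀ w i j = L i j := by
      intro i j
      by_cases hij : i = j
      · subst hij
        have h1 := Stmt5Aux.g_sum_row w i
        have h2 := hLrow i
        rw [← Finset.add_sum_erase Finset.univ _ (Finset.mem_univ i)] at h1 h2
        have h3 : ∑ j ∈ Finset.univ.erase i, Stmt5Aux.g a₀ b₀ w i j
            = ∑ j ∈ Finset.univ.erase i, L i j :=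
          Finset.sum_congr rfl fun j hj =>
            hoffg' i j (Ne.symm (Finset.ne_of_mem_erase hj))
        linear_combination h1 - h2 - h3
      · exact hoffg' i j hij
    have hAw : A.mulVec w = 0 := by
      funext ki
      obtain ⟨k, i⟩ := ki
      rw [Stmt5Aux.bridge V A hA w k i]
      calc ∑ j, Stmt5Aux.g a₀ b₀ w i j * V k j = ∑ j, L i j * V k j :=
            Finset.sum_congr rfl fun j _ => by rw [hgL]
        _ = 0 := hLV k i
    exact hwne (hinj (hAw.trans (Matrix.mulVec_zero A).symm))
  · -- m + 2 ≤ τ → injective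
    intro hτ2
    have hker : ∀ y : Stmt5Aux.S (m+4) a₀ b₀ → ℂ, A.mulVec y = 0 → y = 0 := by
      intro y hy
      have hg0 : ∀ (k : Fin τ) i, ∑ j, Stmt5Aux.g a₀ b₀ y i j * V k j = 0 := by
        intro k i
        rw [← Stmt5Aux.bridge V A hA y k i, hy]
        rfl
      have hrow : ∀ i, ∑ j, Stmt5Aux.g a₀ b₀ y i j = 0 := Stmt5Aux.g_sum_row y
      have hgab : Stmt5Aux.g a₀ b₀ y a₀ b₀ = 0 := by
        rw [Stmt5Aux.g_offdiag y a₀ b₀ hab, dif_neg (by simp)]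
      have hga₀ : (fun j => Stmt5Aux.g a₀ b₀ y a₀ j) = 0 := by
        refine Stmt5Aux.ker_aux m τ hτ2 V hgen b₀ _ hgab (hrow a₀) ?_
        intro k
        calc ∑ j, V k j * Stmt5Aux.g a₀ b₀ y a₀ j
            = ∑ j, Stmt5Aux.g a₀ b₀ y a₀ j * V k j :=
              Finset.sum_congr rfl fun j _ => mul_comm _ _
          _ = 0 := hg0 k a₀
      have hgall : ∀ j₀ i, Stmt5Aux.g a₀ b₀ y i j₀ = 0 := by
        intro j₀
        have hz : (fun i => Stmt5Aux.g a₀ b₀ y i j₀) = 0 := by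
          refine Stmt5Aux.ker_aux m τ hτ2 V hgen a₀ _ (congrFun hga₀ j₀) ?_ ?_
          · calc ∑ i, Stmt5Aux.g a₀ b₀ y i j₀
                = ∑ i, Stmt5Aux.g a₀ b₀ y j₀ i :=
                  Finset.sum_congr rfl fun i _ => Stmt5Aux.g_symm y i j₀
              _ = 0 := hrow j₀
          · intro k
            calc ∑ i, V k i * Stmt5Aux.g a₀ b₀ y i j₀
                = ∑ i, Stmt5Aux.g a₀ b₀ y j₀ i * V k i :=
                  Finset.sum_congr rfl fun i _ => by rw [Stmt5Aux.g_symm y i j₀]; ring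
              _ = 0 := hg0 k j₀
        exact fun i => congrFun hz i
      funext p
      have hp0 := hgall p.1.2 p.1.1
      rw [Stmt5Aux.g_offdiag y p.1.1 p.1.2 p.2.1, dif_pos] at hp0
      · have h6 : y p = 0 := neg_eq_zero.mp hp0
        simpa using h6
      · exact p.2.2
    intro y z hyz
    have h := hker (y - z) (by rw [Matrix.mulVec_sub, hyz, sub_self])
    exact sub_eq_zero.mp h
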